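/- For any ordinal μ, the lexicographic order on the product space [0,1]^μ (indexed by μ, with the product topology) is a linear order in which every non-empty closed subset has both a least and a greatest element. -/

import Mathlib

/-- The lexicographic order on `[0,1]^μ`: `f ≼ g` iff `f = g` or `f α < g α` at the
least index `α` where they differ. -/
def ordLexOrder (μ : Ordinal) (f g : μ.ToType → unitInterval) : Prop :=
  f = g ∨ ∃ α : μ.ToType, (∀ β : μ.ToType, β < α → f β = g β) ∧ f α < g α

namespace LexAux

instance : Fact ((0:ℝ) ≤ 1) := ⟨zero_le_one⟩

variable (μ : Ordinal) (F : Set (μ.ToType → unitInterval))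

/-- The candidate least element, defined by transfinite recursion. -/
noncomputable def lexInf : μ.ToType → unitInterval :=
  (wellFounded_lt (α := μ.ToType)).fix fun α ih =>
    sInf ((fun f => f α) '' {f | f ∈ F ∧ ∀ β (h : β < α), f β = ih β h})

/-- The set of elements of `F` agreeing with `lexInf` below `α`. -/
def Cset (α : μ.ToType) : Set (μ.ToType → unitInterval) :=
  {f | f ∈ F ∧ ∀ β < α, f β = lexInf μ F β}

lemma lexInf_eq (α : μ.ToType) :
    lexInf μ F α = sInf ((fun f => f α) '' Cset μ F α) := by
  rw [lexInf, WellFounded.fix_eq]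
  rfl

lemma isClosed_Cset (hF : IsClosed F) (α : μ.ToType) : IsClosed (Cset μ F α) := by
  have : Cset μ F α = F ∩ ⋂ β, ⋂ (_ : β < α), {f | f β = lexInf μ F β} := by
    ext f; simp [Cset, Set.mem_iInter]
  rw [this]
  exact hF.inter (isClosed_iInter fun β => isClosed_iInter fun _ =>
    isClosed_eq (continuous_apply β) continuous_const)

lemma isCompact_Cset (hF : IsClosed F) (α : μ.ToType) : IsCompact (Cset μ F α) :=
  (isClosed_Cset μ F hF α).isCompact

/-- The set of elements of `F` agreeing with `lexInf` up to and including `α`. -/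
def Dset (α : μ.ToType) : Set (μ.ToType → unitInterval) :=
  {f | f ∈ Cset μ F α ∧ f α = lexInf μ F α}

lemma Dset_subset_Cset (α : μ.ToType) : Dset μ F α ⊆ Cset μ F α := fun _ h => h.1

lemma isClosed_Dset (hF : IsClosed F) (α : μ.ToType) : IsClosed (Dset μ F α) :=
  (isClosed_Cset μ F hF α).inter (isClosed_eq (continuous_apply α) continuous_const)

lemma Dset_antitone {β α : μ.ToType} (h : β ≤ α) : Dset μ F α ⊆ Dset μ F β := by
  rintro f ⟨⟨hfF, hagree⟩, hfα⟩
  rcases eq_or_lt_of_le h with rfl | h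
  · exact ⟨⟨hfF, hagree⟩, hfα⟩
  · exact ⟨⟨hfF, fun γ hγ => hagree γ (hγ.trans h)⟩, hagree β h⟩

lemma Dset_nonempty_of_Cset (hF : IsClosed F) (α : μ.ToType) (hC : (Cset μ F α).Nonempty) :
    (Dset μ F α).Nonempty := by
  have hcomp : IsCompact ((fun f => f α) '' Cset μ F α) :=
    (isCompact_Cset μ F hF α).image (continuous_apply α)
  have hmem : sInf ((fun f => f α) '' Cset μ F α) ∈ (fun f => f α) '' Cset μ F α :=
    hcomp.sInf_mem (hC.image _)
  rw [← lexInf_eq] at hmem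
  obtain ⟨f, hf, hfα⟩ := hmem
  exact ⟨f, hf, hfα⟩

lemma Cset_eq_iInter (α : μ.ToType) :
    Cset μ F α = F ∩ ⋂ β : {β : μ.ToType // β < α}, Dset μ F β.1 := by
  ext f
  simp only [Cset, Set.mem_inter_iff, Set.mem_iInter, Set.mem_setOf_eq, Subtype.forall]
  constructor
  · rintro ⟨hfF, hagree⟩
    exact ⟨hfF, fun β hβ => ⟨⟨hfF, fun γ hγ => hagree γ (hγ.trans hβ)⟩, hagree β hβ⟩⟩
  · rintro ⟨hfF, hD⟩
    exact ⟨hfF, fun β hβ => (hD β hβ).2⟩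

lemma Cset_nonempty (hF : IsClosed F) (hne : F.Nonempty) (α : μ.ToType) :
    (Cset μ F α).Nonempty := by
  induction α using WellFoundedLT.induction with
  | ind α ih =>
    by_cases h : ∃ β, β < α
    · have : Nonempty {β : μ.ToType // β < α} := ⟨⟨h.choose, h.choose_spec⟩⟩
      have hne' : (⋂ β : {β : μ.ToType // β < α}, Dset μ F β.1).Nonempty := by
        apply IsCompact.nonempty_iInter_of_directed_nonempty_isCompact_isClosed
        · intro β γ
          rcases le_total β.1 γ.1 with hle | hle
          · exact ⟨γ, Dset_antitone μ F hle, le_refl _⟩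
          · exact ⟨β, le_refl _, Dset_antitone μ F hle⟩
        · exact fun β => Dset_nonempty_of_Cset μ F hF β.1 (ih β.1 β.2)
        · exact fun β => ((isClosed_Dset μ F hF β.1)).isCompact
        · exact fun β => isClosed_Dset μ F hF β.1
      obtain ⟨f, hf⟩ := hne'
      refine ⟨f, ?_⟩
      rw [Cset_eq_iInter]
      have hβ0 : f ∈ Dset μ F h.choose := Set.mem_iInter.1 hf ⟨h.choose, h.choose_spec⟩
      exact ⟨hβ0.1.1, hf⟩
    · push_neg at h
      obtain ⟨f, hf⟩ := hne
      exact ⟨f, hf, fun β hβ => absurd hβ (not_lt.2 (h β))⟩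

lemma exists_least (hF : IsClosed F) (hne : F.Nonempty) :
    ∃ a ∈ F, ∀ x ∈ F, ordLexOrder μ a x := by
  by_cases hμ : Nonempty μ.ToType
  · have hne' : (⋂ α, Dset μ F α).Nonempty := by
      apply IsCompact.nonempty_iInter_of_directed_nonempty_isCompact_isClosed
      · intro α β
        rcases le_total α β with hle | hle
        · exact ⟨β, Dset_antitone μ F hle, le_refl _⟩
        · exact ⟨α, le_refl _, Dset_antitone μ F hle⟩
      · exact fun α => Dset_nonempty_of_Cset μ F hF α (Cset_nonempty μ F hF hne α)
      · exact fun α => (isClosed_Dset μ F hF α).isCompact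
      · exact fun α => isClosed_Dset μ F hF α
    obtain ⟨a, ha⟩ := hne'
    have haD : ∀ α, a ∈ Dset μ F α := Set.mem_iInter.1 ha
    refine ⟨a, (haD (Classical.arbitrary _)).1.1, fun x hx => ?_⟩
    by_cases hax : a = x
    · exact Or.inl hax
    · have hS : {α | a α ≠ x α}.Nonempty := by
        by_contra h
        exact hax (funext fun α => not_not.1 fun hc =>
          h ⟨α, hc⟩)
      set α := (wellFounded_lt (α := μ.ToType)).min _ hS with hα
      have hαmem : a α ≠ x α := (wellFounded_lt (α := μ.ToType)).min_mem _ hS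
      have hagree : ∀ β, β < α → a β = x β := fun β hβ => by
        by_contra hc
        exact (wellFounded_lt (α := μ.ToType)).not_lt_min _ hc hβ
      have hxC : x ∈ Cset μ F α :=
        ⟨hx, fun β hβ => (hagree β hβ).symm.trans ((haD β).2)⟩
      have hle : lexInf μ F α ≤ x α := by
        rw [lexInf_eq]
        exact csInf_le (OrderBot.bddBelow _) ⟨x, hxC, rfl⟩
      rw [← (haD α).2] at hle
      exact Or.inr ⟨α, hagree, lt_of_le_of_ne hle hαmem⟩
  · obtain ⟨a, ha⟩ := hne
    exact ⟨a, ha, fun x _ => Or.inl (funext fun α => absurd ⟨α⟩ hμ)⟩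

end LexAux

/-- For any ordinal μ, the lexicographic order on the product space `[0,1]^μ` (with the
product topology) is a linear order in which every non-empty closed subset has both a
least and a greatest element. -/
theorem ordLexOrder_symmetric_topological_well_order (μ : Ordinal) :
    IsLinearOrder (μ.ToType → unitInterval) (ordLexOrder μ) ∧
      ∀ F : Set (μ.ToType → unitInterval), IsClosed F → F.Nonempty →
        (∃ a ∈ F, ∀ x ∈ F, ordLexOrder μ a x) ∧ (∃ b ∈ F, ∀ x ∈ F, ordLexOrder μ x b) := by
  constructor
  · haveI : IsRefl _ (ordLexOrder μ) := ⟨fun f => Or.inl rfl⟩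
    haveI : IsTrans _ (ordLexOrder μ) := ⟨?trans⟩
    haveI : IsAntisymm _ (ordLexOrder μ) := ⟨?antisymm⟩
    haveI : IsTotal _ (ordLexOrder μ) := ⟨?total⟩
    haveI : IsPreorder _ (ordLexOrder μ) := ⟨⟩
    haveI : IsPartialOrder _ (ordLexOrder μ) := ⟨⟩
    exact ⟨⟩
    case trans =>
      rintro f g h (rfl | ⟨α, hag, hlt⟩) hgh
      · exact hgh
      rcases hgh with rfl | ⟨α', hag', hlt'⟩
      · exact Or.inr ⟨α, hag, hlt⟩
      rcases lt_trichotomy α α' with hc | rfl | hc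
      · exact Or.inr ⟨α, fun β hβ => (hag β hβ).trans (hag' β (hβ.trans hc)),
          hlt.trans_eq (hag' α hc)⟩
      · exact Or.inr ⟨α, fun β hβ => (hag β hβ).trans (hag' β hβ), hlt.trans hlt'⟩
      · exact Or.inr ⟨α', fun β hβ => (hag β (hβ.trans hc)).trans (hag' β hβ),
          (hag α' hc).trans_lt hlt'⟩
    case antisymm =>
      rintro f g (rfl | ⟨α, hag, hlt⟩) hgf
      · rfl
      rcases hgf with rfl | ⟨α', hag', hlt'⟩
      · rfl
      rcases lt_trichotomy α α' with hc | rfl | hc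
      · exact absurd (hag' α hc) (ne_of_gt hlt)
      · exact absurd (hlt.trans hlt') (lt_irrefl _)
      · exact absurd (hag α' hc) (ne_of_gt hlt')
    case total =>
      intro f g
      by_cases hfg : f = g
      · exact Or.inl (Or.inl hfg)
      have hS : {α | f α ≠ g α}.Nonempty := by
        by_contra h
        exact hfg (funext fun α => not_not.1 fun hc => h ⟨α, hc⟩)
      set α := (wellFounded_lt (α := μ.ToType)).min _ hS
      have hαmem : f α ≠ g α := (wellFounded_lt (α := μ.ToType)).min_mem _ hS
      have hagree : ∀ β, β < α → f β = g β := fun β hβ => by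
        by_contra hc
        exact (wellFounded_lt (α := μ.ToType)).not_lt_min _ hc hβ
      rcases lt_or_gt_of_ne hαmem with h | h
      · exact Or.inl (Or.inr ⟨α, hagree, h⟩)
      · exact Or.inr (Or.inr ⟨α, fun β hβ => (hagree β hβ).symm, h⟩)
  · intro F hF hne
    refine ⟨LexAux.exists_least μ F hF hne, ?_⟩
    -- greatest: apply least to image under the symmetry map
    set e : (μ.ToType → unitInterval) → (μ.ToType → unitInterval) :=
      fun f α => unitInterval.symm (f α) with he
    have hecont : Continuous e := continuous_pi fun α =>
      unitInterval.continuous_symm.comp (continuous_apply α)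
    have heinv : ∀ f, e (e f) = f := fun f => funext fun α => unitInterval.symm_symm _
    have himg : e '' F = e ⁻¹' F := by
      ext f
      constructor
      · rintro ⟨g, hg, rfl⟩
        simpa [heinv] using hg
      · intro hf
        exact ⟨e f, hf, heinv f⟩
    have hclosed : IsClosed (e '' F) := himg ▸ hF.preimage hecont
    obtain ⟨f, hf⟩ := hne
    obtain ⟨a, haF, hleast⟩ := LexAux.exists_least μ (e '' F) hclosed ⟨e f, f, hf, rfl⟩
    obtain ⟨b, hbF, rfl⟩ := haF
    refine ⟨b, hbF, fun x hx => ?_⟩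
    rcases hleast (e x) ⟨x, hx, rfl⟩ with heq | ⟨α, hag, hlt⟩
    · exact Or.inl (by
        have := congrArg e heq
        rw [heinv, heinv] at this
        exact this.symm)
    · refine Or.inr ⟨α, fun β hβ => ?_, ?_⟩
      · have := (hag β hβ).symm
        simpa [he] using congrArg unitInterval.symm this
      · exact unitInterval.symm_lt_symm.1 hlt
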